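/- The map t ↦ ⟨exp(2πit), exp(2πit/n₁), exp(2πit/(n₁n₂)), ...⟩ is an injective continuous group homomorphism from (ℝ,+) into the solenoid Σ_N, and its image is the path component of the identity. -/

import Mathlib

open Real

namespace SolenoidPaper

/-- The solenoid over `N`, as the closed subgroup of `∏ S¹` of sequences with
`z j = z (j+1) ^ N j`. -/
noncomputable def solenoid (N : ℕ → ℕ) : Subgroup (∀ _ : ℕ, Circle) where
  carrier := {z | ∀ j, z j = z (j + 1) ^ N j}
  mul_mem' := by
    intro a b ha hb j
    simp only [Pi.mul_apply, mul_pow]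
    rw [← ha j, ← hb j]
  one_mem' := by intro j; simp
  inv_mem' := by
    intro a ha j
    simp only [Pi.inv_apply, inv_pow]
    rw [← ha j]

/-- The one-parameter subgroup `t ↦ ⟨exp(2πit/(n₀⋯n_{j-1}))⟩_j` of the solenoid. -/
noncomputable def piN (N : ℕ → ℕ) (t : ℝ) : ∀ _ : ℕ, Circle :=
  fun j => Circle.exp (2 * π * t / ∏ i ∈ Finset.range j, (N i : ℝ))

lemma circle_exp_nat_mul (n : ℕ) (x : ℝ) : Circle.exp x ^ n = Circle.exp (n * x) := by
  induction n with
  | zero => simp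
  | succ k ih =>
    rw [pow_succ, ih, ← Circle.exp_add]
    congr 1
    push_cast
    ring

lemma piN_mem (N : ℕ → ℕ) (hN : ∀ j, 1 ≤ N j) (t : ℝ) : piN N t ∈ solenoid N := by
  intro j
  have hne : (∏ i ∈ Finset.range j, (N i : ℝ)) ≠ 0 := by
    refine Finset.prod_ne_zero_iff.mpr fun i _ => ?_
    have := hN i; positivity
  have hNj : (N j : ℝ) ≠ 0 := by have := hN j; positivity
  show Circle.exp _ = Circle.exp _ ^ N j
  rw [circle_exp_nat_mul]
  congr 1
  rw [Finset.prod_range_succ]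
  field_simp


lemma circle_mem_slitPlane {z : Circle} (h : (z : ℂ) ≠ -1) :
    (z : ℂ) ∈ Complex.slitPlane := by
  rw [Complex.mem_slitPlane_iff]
  by_contra hc
  push_neg at hc
  obtain ⟨h1, h2⟩ := hc
  apply h
  have hn : Complex.normSq z = 1 := z.normSq_coe
  rw [Complex.normSq_apply, h2, mul_zero, add_zero, mul_self_eq_one_iff] at hn
  have hre : (z : ℂ).re = -1 := by
    rcases hn with h' | h'
    · exfalso; rw [h'] at h1; linarith
    · exact h'
  apply Complex.ext <;> simp [hre, h2]

lemma circle_exp_sum (n : ℕ) (g : ℕ → ℝ) :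
    Circle.exp (∑ k ∈ Finset.range n, g k) = ∏ k ∈ Finset.range n, Circle.exp (g k) := by
  induction n with
  | zero => simp
  | succ k ih => rw [Finset.sum_range_succ, Finset.prod_range_succ, Circle.exp_add, ih]

lemma lift_unique {θ φ : unitInterval → ℝ} (hθ : Continuous θ) (hφ : Continuous φ)
    (h : ∀ s, Circle.exp (θ s) = Circle.exp (φ s)) (h0 : θ 0 = φ 0) : θ = φ :=
  (T2Space.isSeparatedMap Circle.exp).eq_of_comp_eq
    isLocalHomeomorph_circleExp.isLocallyInjective hθ hφ (funext h) 0 h0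

lemma exists_lift (γ : unitInterval → Circle) (hγ : Continuous γ) (h0 : γ 0 = 1) :
    ∃ θ : unitInterval → ℝ, Continuous θ ∧ θ 0 = 0 ∧ ∀ s, Circle.exp (θ s) = γ s := by
  set f : ℝ → Circle := γ ∘ Set.projIcc 0 1 zero_le_one with hf
  have hfc : UniformContinuous f :=
    (CompactSpace.uniformContinuous_of_continuous hγ).comp
      (LipschitzWith.projIcc zero_le_one).uniformContinuous
  obtain ⟨δ, hδ, hδ2⟩ := Metric.uniformContinuous_iff.1 hfc 2 two_pos
  obtain ⟨n, hn⟩ := exists_nat_one_div_lt hδ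
  set m : ℕ := n + 1 with hm
  set c : ℝ := 1 / m with hc
  have hm0 : (0:ℝ) < m := by positivity
  have hcδ : c < δ := by rw [hc, hm]; push_cast; exact hn
  have hc0 : 0 < c := by positivity
  set g : ℝ → ℕ → Circle := fun t k => f (min t (k * c)) with hg
  have hgc : ∀ k, Continuous fun t => g t k := fun k =>
    hfc.continuous.comp (continuous_id.min continuous_const)
  have hdist : ∀ t k, dist (g t (k + 1)) (g t k) < 2 := by
    intro t k
    apply hδ2
    rw [Real.dist_eq]
    calc |min t ((k + 1 : ℕ) * c) - min t ((k : ℕ) * c)|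
        ≤ max |t - t| |(k + 1 : ℕ) * c - (k : ℕ) * c| := abs_min_sub_min_le_max _ _ _ _
      _ = c := by
          push_cast
          rw [sub_self, abs_zero, max_eq_right (abs_nonneg _)]
          rw [show ((k : ℝ) + 1) * c - k * c = c by ring, abs_of_pos hc0]
      _ < δ := hcδ
  have key : ∀ t k, ((g t (k + 1) / g t k : Circle) : ℂ) ∈ Complex.slitPlane := by
    intro t k
    apply circle_mem_slitPlane
    intro hc1
    rw [Circle.coe_div, div_eq_iff (Circle.coe_ne_zero _)] at hc1
    have := hdist t k
    rw [show dist (g t (k + 1)) (g t k) = dist (g t (k + 1) : ℂ) (g t k) from rfl, Complex.dist_eq, hc1] at this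
    have h2 : ‖(-1 * (g t k : ℂ) - g t k)‖ = 2 := by
      rw [show (-1 : ℂ) * (g t k : ℂ) - g t k = (-2) * g t k by ring]
      rw [norm_mul, Circle.norm_coe]
      simp
    rw [h2] at this
    exact lt_irrefl _ this
  set Θ : ℝ → ℝ := fun t =>
    ∑ k ∈ Finset.range m, Complex.arg ((g t (k + 1) / g t k : Circle) : ℂ) with hΘ
  have hΘc : Continuous Θ := by
    apply continuous_finset_sum
    intro k _
    rw [continuous_iff_continuousAt]
    intro t
    show ContinuousAt
      (Complex.arg ∘ fun x => ((g x (k + 1) / g x k : Circle) : ℂ)) t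
    exact ContinuousAt.comp (x := t)
      (g := Complex.arg) (f := fun x => ((g x (k + 1) / g x k : Circle) : ℂ))
      (Complex.continuousAt_arg (key t k))
      (((hgc (k + 1)).div' (hgc k)).subtype_val.continuousAt)
  have hΘ0 : Θ 0 = 0 := by
    apply Finset.sum_eq_zero
    intro k _
    have hk : ∀ i : ℕ, min (0:ℝ) (i * c) = 0 := fun i =>
      min_eq_left (by positivity)
    simp only [hg, hk]
    rw [div_self']
    simp
  have hΘexp : ∀ t, Circle.exp (Θ t) = g t m / g t 0 := by
    intro t
    rw [hΘ, circle_exp_sum]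
    have : ∀ k ∈ Finset.range m,
        Circle.exp (Complex.arg ((g t (k + 1) / g t k : Circle) : ℂ)) =
          g t (k + 1) / g t k := fun k _ => Circle.exp_arg _
    rw [Finset.prod_congr rfl this, Finset.prod_range_div]
  refine ⟨fun s => Θ s, hΘc.comp continuous_subtype_val, ?_, ?_⟩
  · exact hΘ0
  · intro s
    rw [hΘexp]
    have h1 : g (s : ℝ) m = γ s := by
      have hmc : (m : ℝ) * c = 1 := by rw [hc]; field_simp
      have : min (s : ℝ) ((m : ℕ) * c) = (s : ℝ) := by
        rw [hmc]; exact min_eq_left s.2.2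
      simp only [hg, this, hf, Function.comp_apply, Set.projIcc_val]
    have h2 : g (s : ℝ) 0 = 1 := by
      have : min (s : ℝ) ((0 : ℕ) * c) = 0 := by
        rw [Nat.cast_zero, zero_mul]; exact min_eq_right s.2.1
      simp only [hg, this, hf, Function.comp_apply]
      rw [Set.projIcc_left]
      exact h0
    rw [h1, h2, div_one]


theorem piN_injective_continuous_hom_range_eq_pathComponent
    (N : ℕ → ℕ) (hN : ∀ j, 2 ≤ N j) :
    Continuous (piN N) ∧
    Function.Injective (piN N) ∧
    (∀ s t : ℝ, piN N (s + t) = piN N s * piN N t) ∧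
    (∀ t : ℝ, piN N t ∈ solenoid N) ∧
    Set.range (fun t : ℝ =>
        (⟨piN N t, piN_mem N (fun j => le_trans one_le_two (hN j)) t⟩ : solenoid N)) =
      pathComponent (1 : solenoid N) := by
  have hN1 : ∀ j, 1 ≤ N j := fun j => le_trans one_le_two (hN j)
  set P : ℕ → ℝ := fun j => ∏ i ∈ Finset.range j, (N i : ℝ) with hP
  have hPpos : ∀ j, 0 < P j := fun j => Finset.prod_pos fun i _ =>
    Nat.cast_pos.mpr (lt_of_lt_of_le two_pos (hN i))
  have hP2 : ∀ j, (2 : ℝ) ^ j ≤ P j := by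
    intro j
    rw [hP]
    calc (2 : ℝ) ^ j = ∏ _i ∈ Finset.range j, (2 : ℝ) := by
          rw [Finset.prod_const, Finset.card_range]
      _ ≤ ∏ i ∈ Finset.range j, (N i : ℝ) :=
          Finset.prod_le_prod (fun i _ => by norm_num) (fun i _ => by exact_mod_cast hN i)
  have h2π : (2 * π : ℝ) ≠ 0 := by positivity
  have hcont : Continuous (piN N) := by
    apply continuous_pi
    intro j
    exact Circle.exp.continuous.comp ((continuous_const.mul continuous_id).div_const _)
  have hzero : piN N 0 = 1 := by
    funext j
    show Circle.exp _ = 1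
    rw [mul_zero, zero_div, Circle.exp_zero]
  have hinj : Function.Injective (piN N) := by
    intro s t h
    by_contra hst
    obtain ⟨j, hj⟩ := pow_unbounded_of_one_lt (|s - t|) (one_lt_two (α := ℝ))
    have hcoord : Circle.exp (2 * π * s / P j) = Circle.exp (2 * π * t / P j) := congrFun h j
    rw [Circle.exp_eq_exp] at hcoord
    obtain ⟨k, hk⟩ := hcoord
    have hPne : P j ≠ 0 := (hPpos j).ne'
    have hst' : s - t = k * P j := by
      have h1 : 2 * π * s / P j * P j = (2 * π * t / P j + k * (2 * π)) * P j := by rw [hk]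
      rw [div_mul_cancel₀ _ hPne, add_mul, div_mul_cancel₀ _ hPne] at h1
      have h2 : 2 * π * (s - t) = 2 * π * ((k : ℝ) * P j) := by ring_nf; ring_nf at h1; linarith
      exact mul_left_cancel₀ h2π h2
    have hk0 : k ≠ 0 := by
      intro h0
      rw [h0] at hst'
      simp only [Int.cast_zero, zero_mul] at hst'
      exact hst (sub_eq_zero.mp hst')
    have hge : (2 : ℝ) ^ j ≤ |s - t| := by
      rw [hst', abs_mul, abs_of_pos (hPpos j)]
      calc (2 : ℝ) ^ j ≤ P j := hP2 j
        _ = 1 * P j := (one_mul _).symm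
        _ ≤ |(k : ℝ)| * P j := by
            apply mul_le_mul_of_nonneg_right _ (hPpos j).le
            exact_mod_cast Int.one_le_abs hk0
    linarith
  have hhom : ∀ s t : ℝ, piN N (s + t) = piN N s * piN N t := by
    intro s t
    funext j
    show Circle.exp _ = Circle.exp _ * Circle.exp _
    rw [← Circle.exp_add]
    congr 1
    ring
  refine ⟨hcont, hinj, hhom, piN_mem N hN1, ?_⟩
  ext y
  constructor
  · rintro ⟨t, rfl⟩
    show Joined (1 : solenoid N) _
    exact ⟨{ toFun := fun s => ⟨piN N ((s : ℝ) * t), piN_mem N hN1 _⟩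
             continuous_toFun := Continuous.subtype_mk
               (hcont.comp (continuous_subtype_val.mul continuous_const)) _
             source' := by
               apply Subtype.ext
               show piN N (((0 : unitInterval) : ℝ) * t) = _
               rw [show ((0 : unitInterval) : ℝ) = 0 from rfl, zero_mul, hzero]
               rfl
             target' := by
               apply Subtype.ext
               show piN N (((1 : unitInterval) : ℝ) * t) = _
               rw [show ((1 : unitInterval) : ℝ) = 1 from rfl, one_mul] }⟩
  · intro hy
    obtain ⟨γ⟩ := (hy : Joined 1 y)
    have coordc : ∀ j, Continuous fun s : unitInterval => ((γ s : ∀ _ : ℕ, Circle) j) :=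
      fun j => (continuous_apply j).comp (continuous_subtype_val.comp γ.continuous)
    have coord0 : ∀ j, ((γ 0 : ∀ _ : ℕ, Circle) j) = 1 := by
      intro j
      rw [γ.source]
      rfl
    choose θ hθc hθ0 hθe using fun j => exists_lift _ (coordc j) (coord0 j)
    have hstep : ∀ j, θ j = fun s => (N j : ℝ) * θ (j + 1) s := by
      intro j
      apply lift_unique (φ := fun s => (N j : ℝ) * θ (j + 1) s) (hθc j) (continuous_const.mul (hθc (j + 1)))
      · intro s
        show Circle.exp (θ j s) = Circle.exp ((N j : ℝ) * θ (j + 1) s)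
        rw [hθe j s, ← circle_exp_nat_mul, hθe (j + 1) s]
        exact (γ s).2 j
      · show θ j 0 = (N j : ℝ) * θ (j + 1) 0
        rw [hθ0 j, hθ0 (j + 1), mul_zero]
    have hkey : ∀ j, θ 0 1 = P j * θ j 1 := by
      intro j
      induction j with
      | zero => simp [hP]
      | succ k ih =>
        rw [ih]
        simp only [hstep k, hP, Finset.prod_range_succ]
        ring
    refine ⟨θ 0 1 / (2 * π), ?_⟩
    apply Subtype.ext
    funext j
    show Circle.exp (2 * π * (θ 0 1 / (2 * π)) / P j) = (y : ∀ _ : ℕ, Circle) j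
    have hmc : 2 * π * (θ 0 1 / (2 * π)) = θ 0 1 := by field_simp
    rw [hmc, hkey j, mul_div_cancel_left₀ _ (hPpos j).ne', hθe j 1, γ.target]

end SolenoidPaper
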